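/- arXiv:0905.3156 — 2 statements merged into one kernel-verified Lean document; each statement's English description precedes it below -/
import Mathlib

section
/- Let C be a cocomplete category and (T, μ, η) a monad on C that preserves reflexive coequalizers. For a T-algebra X with structure map ξ_X : TX → X and an object Y of C, the coproduct X ⊔ TY in the category of T-algebras is computed as the reflexive coequalizer in C of the two maps α, β : T(TX ⊔ Y) ⇉ T(X ⊔ Y), where α = μ ∘ T(T(i₁) ⊔ (T(i₂)∘η_Y)) and β = T(ξ_X ⊔ i₂); moreover this coequalizer is also the coequalizer in the category of T-algebras. -/
open CategoryTheory CategoryTheory.Limits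

universe v u

namespace Stmt14

variable {C : Type u} [Category.{v} C] [HasColimits C] (T : Monad C) (X : T.Algebra) (Y : C)

noncomputable section

lemma μnat {A B : C} (f : A ⟶ B) :
    T.map (T.map f) ≫ T.μ.app B = T.μ.app A ≫ T.map f := T.μ.naturality f

lemma ηnat {A B : C} (f : A ⟶ B) :
    f ≫ T.η.app B = T.η.app A ≫ T.map f := T.η.naturality f

/-- the map g : TX ⊔ Y → T(X ⊔ Y) -/
def gm : T.obj X.A ⨿ Y ⟶ T.obj (X.A ⨿ Y) :=
  coprod.desc (T.map coprod.inl) (T.η.app Y ≫ T.map coprod.inr)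

/-- the map f : TX ⊔ Y → X ⊔ Y -/
def fm : T.obj X.A ⨿ Y ⟶ X.A ⨿ Y :=
  coprod.desc (X.a ≫ coprod.inl) coprod.inr

/-- α -/
def am : T.obj (T.obj X.A ⨿ Y) ⟶ T.obj (X.A ⨿ Y) :=
  T.map (gm T X Y) ≫ T.μ.app (X.A ⨿ Y)

/-- β -/
def bm : T.obj (T.obj X.A ⨿ Y) ⟶ T.obj (X.A ⨿ Y) :=
  T.map (fm T X Y)

lemma refl_pair : IsReflexivePair (am T X Y) (bm T X Y) := by
  apply IsReflexivePair.mk' (T.map (coprod.map (T.η.app X.A) (𝟙 Y)))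
  · rw [am, ← T.map_comp_assoc]
    have h : coprod.map (T.η.app X.A) (𝟙 Y) ≫ gm T X Y = T.η.app (X.A ⨿ Y) := by
      rw [gm]; ext <;> simp [ηnat, coprod.inl_desc, coprod.inr_desc]
    rw [h, Monad.right_unit]; rfl
  · rw [bm, ← T.map_comp]
    have h : coprod.map (T.η.app X.A) (𝟙 Y) ≫ fm T X Y = 𝟙 _ := by
      rw [fm]; ext
      · simp [reassoc_of% X.unit, coprod.inl_desc]
      · simp [coprod.inr_desc]
    rw [h, T.map_id]

omit [HasColimits C] in
lemma map_refl_pair {A B : C} (f g : A ⟶ B) (h : IsReflexivePair f g) :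
    IsReflexivePair (T.map f) (T.map g) := by
  obtain ⟨s, hs1, hs2⟩ := @IsReflexivePair.common_section _ _ _ _ f g h
  exact IsReflexivePair.mk' (T.map s) (by rw [← T.map_comp, hs1, T.map_id])
    (by rw [← T.map_comp, hs2, T.map_id])

/-- P, the coequalizer in C -/
def P0 : C := coequalizer (am T X Y) (bm T X Y)

def π0 : T.obj (X.A ⨿ Y) ⟶ P0 T X Y := coequalizer.π _ _

lemma hw0 : am T X Y ≫ π0 T X Y = bm T X Y ≫ π0 T X Y := coequalizer.condition _ _

/-- the coequalizer is a colimit cofork -/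
def hC : IsColimit (Cofork.ofπ (π0 T X Y) (hw0 T X Y)) := coequalizerIsCoequalizer _ _

variable (hT : ∀ {A B : C} (f g : A ⟶ B), IsReflexivePair f g →
      Nonempty (PreservesColimit (parallelPair f g) T.toFunctor))

include hT

omit hT in
lemma hw1' : T.map (am T X Y) ≫ T.map (π0 T X Y) = T.map (bm T X Y) ≫ T.map (π0 T X Y) := by
  rw [← T.map_comp, hw0, T.map_comp]

/-- T applied to the coequalizer cofork is a colimit -/
def hTC : IsColimit (Cofork.ofπ (T.map (π0 T X Y)) (hw1' T X Y)) :=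
  letI := (hT _ _ (refl_pair T X Y)).some
  isColimitCoforkMapOfIsColimit T.toFunctor _ (hC T X Y)

omit hT in
lemma hw2' : T.map (T.map (am T X Y)) ≫ T.map (T.map (π0 T X Y))
    = T.map (T.map (bm T X Y)) ≫ T.map (T.map (π0 T X Y)) := by
  rw [← T.map_comp, hw1', T.map_comp]

def hTTC : IsColimit (Cofork.ofπ (T.map (T.map (π0 T X Y))) (hw2' T X Y)) :=
  letI := (hT _ _ (map_refl_pair T _ _ (refl_pair T X Y))).some
  isColimitCoforkMapOfIsColimit T.toFunctor _ (hTC T X Y hT)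

lemma epi_Tπ0 : Epi (T.map (π0 T X Y)) := by
  have := epi_of_isColimit_cofork (hTC T X Y hT)
  simpa using this

lemma epi_TTπ0 : Epi (T.map (T.map (π0 T X Y))) := by
  have := epi_of_isColimit_cofork (hTTC T X Y hT)
  simpa using this

omit hT in
lemma wPa : T.map (am T X Y) ≫ (T.μ.app (X.A ⨿ Y) ≫ π0 T X Y)
    = T.map (bm T X Y) ≫ (T.μ.app (X.A ⨿ Y) ≫ π0 T X Y) := by
  have h1 : T.map (am T X Y) ≫ T.μ.app (X.A ⨿ Y)
      = T.μ.app (T.obj X.A ⨿ Y) ≫ am T X Y := by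
    rw [am, T.map_comp, Category.assoc, T.assoc, ← Category.assoc, μnat T (gm T X Y),
      Category.assoc]
  have h2 : T.map (bm T X Y) ≫ T.μ.app (X.A ⨿ Y)
      = T.μ.app (T.obj X.A ⨿ Y) ≫ bm T X Y := μnat T (fm T X Y)
  rw [← Category.assoc, h1, ← Category.assoc, h2, Category.assoc, Category.assoc, hw0]

/-- the algebra structure map on P -/
def Pa : T.obj (P0 T X Y) ⟶ P0 T X Y :=
  Cofork.IsColimit.desc (hTC T X Y hT) (T.μ.app (X.A ⨿ Y) ≫ π0 T X Y) (wPa T X Y)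

lemma π0_Pa : T.map (π0 T X Y) ≫ Pa T X Y hT = T.μ.app (X.A ⨿ Y) ≫ π0 T X Y := by
  have := Cofork.IsColimit.π_desc' (hTC T X Y hT) (T.μ.app (X.A ⨿ Y) ≫ π0 T X Y) (wPa T X Y)
  simpa [Pa] using this

/-- P as a T-algebra -/
def PAlg : T.Algebra where
  A := P0 T X Y
  a := Pa T X Y hT
  unit := by
    have : Epi (π0 T X Y) := by rw [π0]; exact coequalizer.π_epi
    rw [← cancel_epi (π0 T X Y), ← Category.assoc, ηnat T (π0 T X Y), Category.assoc,
      π0_Pa, Monad.left_unit_assoc, Category.comp_id]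
  assoc := by
    have : Epi (T.map (T.map (π0 T X Y))) := epi_TTπ0 T X Y hT
    rw [← cancel_epi (T.map (T.map (π0 T X Y)))]
    have h1 : T.map (T.map (π0 T X Y)) ≫ T.μ.app (P0 T X Y) ≫ Pa T X Y hT
        = T.μ.app (T.obj (X.A ⨿ Y)) ≫ T.μ.app (X.A ⨿ Y) ≫ π0 T X Y := by
      rw [← Category.assoc, μnat T (π0 T X Y), Category.assoc, π0_Pa]
    have h2 : T.map (T.map (π0 T X Y)) ≫ T.map (Pa T X Y hT) ≫ Pa T X Y hT
        = T.map (T.μ.app (X.A ⨿ Y)) ≫ T.μ.app (X.A ⨿ Y) ≫ π0 T X Y := by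
      rw [← Category.assoc, ← T.map_comp, π0_Pa, T.map_comp, Category.assoc, π0_Pa,
        ← Category.assoc]
    rw [h1, h2, ← Category.assoc, ← Category.assoc, T.assoc]

omit hT in
lemma π0_desc {Z : C} (k : T.obj (X.A ⨿ Y) ⟶ Z) (hk : am T X Y ≫ k = bm T X Y ≫ k) :
    π0 T X Y ≫ Cofork.IsColimit.desc (hC T X Y) k hk = k := by
  simpa using Cofork.IsColimit.π_desc' (hC T X Y) k hk

omit hT in
lemma key : T.μ.app X.A ≫ T.map coprod.inl ≫ π0 T X Y
    = T.map X.a ≫ T.map coprod.inl ≫ π0 T X Y := by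
  have h1 : T.map (coprod.inl : T.obj X.A ⟶ T.obj X.A ⨿ Y) ≫ am T X Y
      = T.μ.app X.A ≫ T.map coprod.inl := by
    rw [am, ← T.map_comp_assoc]
    have h : (coprod.inl : T.obj X.A ⟶ T.obj X.A ⨿ Y) ≫ gm T X Y = T.map coprod.inl := by
      simp [gm, coprod.inl_desc]
    rw [h, μnat]
  have h2 : T.map (coprod.inl : T.obj X.A ⟶ T.obj X.A ⨿ Y) ≫ bm T X Y
      = T.map X.a ≫ T.map coprod.inl := by
    rw [bm, ← T.map_comp, ← T.map_comp]
    congr 1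
    simp [fm, coprod.inl_desc]
  rw [← Category.assoc, ← Category.assoc, ← h1, ← h2, Category.assoc, Category.assoc, hw0]

/-- the insertion X ⟶ P as an algebra map -/
def j1 : X ⟶ PAlg T X Y hT where
  f := T.η.app X.A ≫ T.map coprod.inl ≫ π0 T X Y
  h := by
    show T.map (T.η.app X.A ≫ T.map coprod.inl ≫ π0 T X Y) ≫ Pa T X Y hT
        = X.a ≫ T.η.app X.A ≫ T.map coprod.inl ≫ π0 T X Y
    have L : T.map (T.η.app X.A ≫ T.map coprod.inl ≫ π0 T X Y) ≫ Pa T X Y hT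
        = T.map coprod.inl ≫ π0 T X Y := by
      rw [T.map_comp, T.map_comp, Category.assoc, Category.assoc, π0_Pa,
        ← Category.assoc (T.map (T.map coprod.inl)), μnat, ← Category.assoc, ← Category.assoc,
        Monad.right_unit]
      simp
    have R : X.a ≫ T.η.app X.A ≫ T.map coprod.inl ≫ π0 T X Y
        = T.map coprod.inl ≫ π0 T X Y := by
      rw [← Category.assoc, ηnat T X.a, Category.assoc, ← key, Monad.left_unit_assoc]
    rw [L, R]

/-- the insertion TY ⟶ P as an algebra map -/
def j2 : T.free.obj Y ⟶ PAlg T X Y hT where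
  f := T.map coprod.inr ≫ π0 T X Y
  h := by
    show T.map (T.map coprod.inr ≫ π0 T X Y) ≫ Pa T X Y hT
        = T.μ.app Y ≫ T.map coprod.inr ≫ π0 T X Y
    rw [T.map_comp, Category.assoc, π0_Pa, ← Category.assoc, μnat, Category.assoc]

/-- π as an algebra map -/
def πA : T.free.obj (X.A ⨿ Y) ⟶ PAlg T X Y hT where
  f := π0 T X Y
  h := π0_Pa T X Y hT

omit hT in
lemma am_nat : T.map (am T X Y) ≫ T.μ.app (X.A ⨿ Y)
    = T.μ.app (T.obj X.A ⨿ Y) ≫ am T X Y := by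
  rw [am, T.map_comp, Category.assoc, T.assoc, ← Category.assoc, μnat T (gm T X Y),
    Category.assoc]

/-- α as an algebra map -/
def αA : T.free.obj (T.obj X.A ⨿ Y) ⟶ T.free.obj (X.A ⨿ Y) where
  f := am T X Y
  h := am_nat T X Y

/-- β as an algebra map -/
def βA : T.free.obj (T.obj X.A ⨿ Y) ⟶ T.free.obj (X.A ⨿ Y) where
  f := bm T X Y
  h := μnat T (fm T X Y)

lemma hwA : αA T X Y ≫ πA T X Y hT = βA T X Y ≫ πA T X Y hT := by
  apply Monad.Algebra.Hom.ext
  exact hw0 T X Y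

/-- the coequalizer lifts to the category of algebras -/
def algCoforkIsColimit : IsColimit (Cofork.ofπ (πA T X Y hT) (hwA T X Y hT)) :=
  Cofork.IsColimit.mk' _ fun s => by
    have hs : am T X Y ≫ s.π.f = bm T X Y ≫ s.π.f := by
      have h := congrArg Monad.Algebra.Hom.f s.condition
      exact h
    have hπ : T.map s.π.f ≫ s.pt.a = T.μ.app (X.A ⨿ Y) ≫ s.π.f := s.π.h
    have he : Epi (T.map (π0 T X Y)) := epi_Tπ0 T X Y hT
    refine ⟨⟨Cofork.IsColimit.desc (hC T X Y) s.π.f hs, ?_⟩, ?_, ?_⟩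
    · show T.map (Cofork.IsColimit.desc (hC T X Y) s.π.f hs) ≫ s.pt.a
        = Pa T X Y hT ≫ Cofork.IsColimit.desc (hC T X Y) s.π.f hs
      rw [← cancel_epi (T.map (π0 T X Y))]
      have L : T.map (π0 T X Y) ≫ T.map (Cofork.IsColimit.desc (hC T X Y) s.π.f hs) ≫ s.pt.a
          = T.μ.app (X.A ⨿ Y) ≫ s.π.f := by
        erw [← Category.assoc, ← T.map_comp, π0_desc, hπ]
      have R : T.map (π0 T X Y) ≫ Pa T X Y hT ≫ Cofork.IsColimit.desc (hC T X Y) s.π.f hs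
          = T.μ.app (X.A ⨿ Y) ≫ s.π.f := by
        erw [← Category.assoc, π0_Pa, Category.assoc, π0_desc]
      rw [L, R]
    · apply Monad.Algebra.Hom.ext
      show π0 T X Y ≫ Cofork.IsColimit.desc (hC T X Y) s.π.f hs = s.π.f
      exact π0_desc T X Y s.π.f hs
    · intro m hm
      apply Monad.Algebra.Hom.ext
      have hmf : π0 T X Y ≫ m.f = s.π.f := by
        have h := congrArg Monad.Algebra.Hom.f hm
        exact h
      have : Epi (π0 T X Y) := by rw [π0]; exact coequalizer.π_epi
      erw [← cancel_epi (π0 T X Y)]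
      show π0 T X Y ≫ m.f = π0 T X Y ≫ Cofork.IsColimit.desc (hC T X Y) s.π.f hs
      erw [π0_desc, hmf]

variable {X Y} in
/-- the comparison map X ⊔ Y → Q for a binary cofan -/
def qmap (s : BinaryCofan X (T.free.obj Y)) : X.A ⨿ Y ⟶ s.pt.A :=
  coprod.desc s.inl.f (T.η.app Y ≫ s.inr.f)

omit hT in
lemma gm_q (s : BinaryCofan X (T.free.obj Y)) :
    gm T X Y ≫ T.map (qmap T s) ≫ s.pt.a = fm T X Y ≫ qmap T s := by
  have hl : T.map s.inl.f ≫ s.pt.a = X.a ≫ s.inl.f := s.inl.h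
  have hr : T.map s.inr.f ≫ s.pt.a = T.μ.app Y ≫ s.inr.f := s.inr.h
  ext
  · erw [gm, fm, coprod.inl_desc_assoc, coprod.inl_desc_assoc, ← Category.assoc, ← T.map_comp,
      qmap, coprod.inl_desc, hl, Category.assoc, coprod.inl_desc]
  · erw [gm, fm, coprod.inr_desc_assoc, coprod.inr_desc_assoc, qmap, coprod.inr_desc,
      Category.assoc, ← Category.assoc (T.map coprod.inr), ← T.map_comp, coprod.inr_desc,
      T.map_comp, Category.assoc, hr, Monad.right_unit_assoc]

omit hT in
lemma wq (s : BinaryCofan X (T.free.obj Y)) :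
    am T X Y ≫ (T.map (qmap T s) ≫ s.pt.a) = bm T X Y ≫ (T.map (qmap T s) ≫ s.pt.a) := by
  have h1 : T.μ.app (X.A ⨿ Y) ≫ T.map (qmap T s) ≫ s.pt.a
      = T.map (T.map (qmap T s) ≫ s.pt.a) ≫ s.pt.a := by
    rw [← Category.assoc, ← μnat, Category.assoc, s.pt.assoc, T.map_comp, Category.assoc]
  rw [am, bm, Category.assoc, h1, ← T.map_comp_assoc, gm_q, T.map_comp, Category.assoc]

/-- the descent map P ⟶ Q for a binary cofan -/
def u (s : BinaryCofan X (T.free.obj Y)) : PAlg T X Y hT ⟶ s.pt where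
  f := Cofork.IsColimit.desc (hC T X Y) (T.map (qmap T s) ≫ s.pt.a) (wq T X Y s)
  h := by
    have he : Epi (T.map (π0 T X Y)) := epi_Tπ0 T X Y hT
    show T.map (Cofork.IsColimit.desc (hC T X Y) (T.map (qmap T s) ≫ s.pt.a) (wq T X Y s))
        ≫ s.pt.a = Pa T X Y hT ≫ _
    rw [← cancel_epi (T.map (π0 T X Y))]
    have L : T.map (π0 T X Y)
        ≫ T.map (Cofork.IsColimit.desc (hC T X Y) (T.map (qmap T s) ≫ s.pt.a) (wq T X Y s))
        ≫ s.pt.a = T.map (T.map (qmap T s)) ≫ T.map (s.pt.a) ≫ s.pt.a := by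
      rw [← Category.assoc, ← T.map_comp, π0_desc, T.map_comp, Category.assoc]
    have R : T.map (π0 T X Y) ≫ Pa T X Y hT
        ≫ Cofork.IsColimit.desc (hC T X Y) (T.map (qmap T s) ≫ s.pt.a) (wq T X Y s)
        = T.map (T.map (qmap T s)) ≫ T.map (s.pt.a) ≫ s.pt.a := by
      rw [← Category.assoc, π0_Pa, Category.assoc, π0_desc, ← Category.assoc, ← μnat,
        Category.assoc, s.pt.assoc]
    rw [L, R]

lemma π0_u (s : BinaryCofan X (T.free.obj Y)) :
    π0 T X Y ≫ (u T X Y hT s).f = T.map (qmap T s) ≫ s.pt.a :=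
  π0_desc T X Y _ (wq T X Y s)

lemma fac_left (s : BinaryCofan X (T.free.obj Y)) : j1 T X Y hT ≫ u T X Y hT s = s.inl := by
  apply Monad.Algebra.Hom.ext
  have hinl : T.η.app X.A ≫ T.map s.inl.f = s.inl.f ≫ T.η.app s.pt.A := (ηnat T s.inl.f).symm
  show (T.η.app X.A ≫ T.map coprod.inl ≫ π0 T X Y) ≫ (u T X Y hT s).f = s.inl.f
  erw [Category.assoc, Category.assoc, π0_u, ← Category.assoc (T.map coprod.inl), ← T.map_comp,
    qmap, coprod.inl_desc, ← Category.assoc, hinl, Category.assoc, s.pt.unit]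
  simp

lemma fac_right (s : BinaryCofan X (T.free.obj Y)) : j2 T X Y hT ≫ u T X Y hT s = s.inr := by
  apply Monad.Algebra.Hom.ext
  have hr : T.map s.inr.f ≫ s.pt.a = T.μ.app Y ≫ s.inr.f := s.inr.h
  show (T.map coprod.inr ≫ π0 T X Y) ≫ (u T X Y hT s).f = s.inr.f
  erw [Category.assoc, π0_u, ← Category.assoc, ← T.map_comp, qmap, coprod.inr_desc, T.map_comp,
    Category.assoc, hr, Monad.right_unit_assoc]

omit hT in
lemma free_ext {A : C} {Q : T.Algebra} (h1 h2 : T.obj A ⟶ Q.A)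
    (e1 : T.μ.app A ≫ h1 = T.map h1 ≫ Q.a) (e2 : T.μ.app A ≫ h2 = T.map h2 ≫ Q.a)
    (e : T.η.app A ≫ h1 = T.η.app A ≫ h2) : h1 = h2 := by
  have hh : ∀ h : T.obj A ⟶ Q.A, T.μ.app A ≫ h = T.map h ≫ Q.a →
      h = T.map (T.η.app A ≫ h) ≫ Q.a := by
    intro h eh
    rw [T.map_comp, Category.assoc, ← eh, ← Category.assoc, Monad.right_unit, Category.id_comp]
  rw [hh h1 e1, hh h2 e2, e]

lemma uniq (s : BinaryCofan X (T.free.obj Y)) (m : PAlg T X Y hT ⟶ s.pt)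
    (hm1 : j1 T X Y hT ≫ m = s.inl) (hm2 : j2 T X Y hT ≫ m = s.inr) : m = u T X Y hT s := by
  apply Monad.Algebra.Hom.ext
  have hmh : T.map m.f ≫ s.pt.a = Pa T X Y hT ≫ m.f := m.h
  have hπm : π0 T X Y ≫ m.f = T.map (qmap T s) ≫ s.pt.a := by
    apply free_ext T (π0 T X Y ≫ m.f) (T.map (qmap T s) ≫ s.pt.a)
    · erw [← Category.assoc, ← π0_Pa T X Y hT, Category.assoc, ← hmh, ← Category.assoc,
        ← T.map_comp]
    · erw [← Category.assoc, ← μnat, Category.assoc, s.pt.assoc, ← Category.assoc, ← T.map_comp]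
    · have hq : T.η.app (X.A ⨿ Y) ≫ T.map (qmap T s) ≫ s.pt.a = qmap T s := by
        rw [← Category.assoc, ← ηnat T (qmap T s), Category.assoc, s.pt.unit, Category.comp_id]
      have h1 : T.η.app X.A ≫ T.map coprod.inl ≫ π0 T X Y ≫ m.f = s.inl.f := by
        have h := congrArg Monad.Algebra.Hom.f hm1
        rw [← h]; show _ = (T.η.app X.A ≫ T.map coprod.inl ≫ π0 T X Y) ≫ m.f
        erw [Category.assoc, Category.assoc]
      have h2 : T.map coprod.inr ≫ π0 T X Y ≫ m.f = s.inr.f := by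
        have h := congrArg Monad.Algebra.Hom.f hm2
        rw [← h]; show _ = (T.map coprod.inr ≫ π0 T X Y) ≫ m.f
        erw [Category.assoc]
      have hLR : T.η.app (X.A ⨿ Y) ≫ π0 T X Y ≫ m.f = qmap T s := by
        apply coprod.hom_ext
        · erw [qmap, coprod.inl_desc, ← Category.assoc, ηnat T coprod.inl, Category.assoc, h1]
        · erw [qmap, coprod.inr_desc, ← Category.assoc, ηnat T coprod.inr, Category.assoc, h2]
      rw [hq]
      exact hLR
  have : Epi (π0 T X Y) := by rw [π0]; exact coequalizer.π_epi
  erw [← cancel_epi (π0 T X Y), hπm]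
  exact (π0_u T X Y hT s).symm

/-- P is the coproduct X ⊔ TY in the category of algebras -/
def coprodIsColimit : IsColimit (BinaryCofan.mk (j1 T X Y hT) (j2 T X Y hT)) :=
  BinaryCofan.isColimitMk (fun s => u T X Y hT s) (fac_left T X Y hT) (fac_right T X Y hT)
    (uniq T X Y hT)

end
end Stmt14

/-- Let `C` be cocomplete and `(T, μ, η)` a monad on `C`
preserving reflexive coequalizers.  For a `T`-algebra `X` (structure map
`ξ_X : TX → X`) and an object `Y` of `C`, the coproduct `X ⊔ TY` in the
category of `T`-algebras is computed as the reflexive coequalizer in `C` of the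
two maps `α, β : T(TX ⊔ Y) ⇉ T(X ⊔ Y)`, where
`α = μ ∘ T(T(i₁) ⊔ (T(i₂)∘η_Y))` and `β = T(ξ_X ⊔ i₂)`; moreover this
coequalizer is also the coequalizer of the diagram in the category of
`T`-algebras. -/
theorem coproduct_algebra_free_as_reflexive_coequalizer
    {C : Type u} [Category.{v} C] [HasColimits C] (T : Monad C)
    (hT : ∀ {A B : C} (f g : A ⟶ B), IsReflexivePair f g →
      Nonempty (PreservesColimit (parallelPair f g) T.toFunctor))
    (X : T.Algebra) (Y : C) :
    letI α : T.obj (T.obj X.A ⨿ Y) ⟶ T.obj (X.A ⨿ Y) :=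
      T.map (coprod.desc (T.map coprod.inl) (T.η.app Y ≫ T.map coprod.inr)) ≫
        T.μ.app (X.A ⨿ Y)
    letI β : T.obj (T.obj X.A ⨿ Y) ⟶ T.obj (X.A ⨿ Y) :=
      T.map (coprod.desc (X.a ≫ coprod.inl) coprod.inr)
    IsReflexivePair α β ∧
    ∃ (P : T.Algebra)
      (π : T.obj (X.A ⨿ Y) ⟶ P.A) (hw : α ≫ π = β ≫ π)
      (j₁ : X ⟶ P) (j₂ : T.free.obj Y ⟶ P),
      -- `P.A` together with `π` is the (reflexive) coequalizer of `α, β` in `C`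
      Nonempty (IsColimit (Cofork.ofπ π hw)) ∧
      -- `P` is the coproduct `X ⊔ TY` in the category of `T`-algebras
      Nonempty (IsColimit (BinaryCofan.mk j₁ j₂)) ∧
      -- moreover the coequalizer diagram lifts to `T`-algebras and `P` is also
      -- the coequalizer there
      ∃ (αA βA : T.free.obj (T.obj X.A ⨿ Y) ⟶ T.free.obj (X.A ⨿ Y))
        (πA : T.free.obj (X.A ⨿ Y) ⟶ P),
        αA.f = α ∧ βA.f = β ∧ πA.f = π ∧
        ∃ hwA : αA ≫ πA = βA ≫ πA,
          Nonempty (IsColimit (Cofork.ofπ πA hwA)) := by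
  exact ⟨Stmt14.refl_pair T X Y,
    Stmt14.PAlg T X Y hT, Stmt14.π0 T X Y, Stmt14.hw0 T X Y,
    Stmt14.j1 T X Y hT, Stmt14.j2 T X Y hT,
    ⟨Stmt14.hC T X Y⟩, ⟨Stmt14.coprodIsColimit T X Y hT⟩,
    Stmt14.αA T X Y, Stmt14.βA T X Y, Stmt14.πA T X Y hT,
    rfl, rfl, rfl, Stmt14.hwA T X Y hT, ⟨Stmt14.algCoforkIsColimit T X Y hT⟩⟩
end

section
/- Composition and equivalence classes in the group completion D⁻¹D are well defined: given morphisms [(s, α, β)] : (a,b) → (c,d) and [(t, α', β')] : (c,d) → (e,f) in D⁻¹D, the composite [(s⊕t, α'∘(α⊕id_t), β'∘(β⊕id_t))] is independent of the choice of representatives, composition is associative, and [(0, id, id)] is the identity; hence D⁻¹D is a category. -/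
/-!
A permutative category is a category `C` with a strictly associative tensor
`⊗ : C × C → C`, a strict two-sided unit `1`, and a natural symmetry
isomorphism `γ : x⊗y → y⊗x` satisfying `γ∘γ = id`, `γ_{x,1} = id` (after the
identifications `x⊗1 = x = 1⊗x`), and the hexagon-collapse condition
`γ_{x⊗y,z} = (γ_{x,z}⊗id_y)∘(id_x⊗γ_{y,z})`.
-/

open CategoryTheory

universe v u

structure Permutative (C : Type u) [Category.{v} C] where
  tensor : C → C → C
  tensorHom : ∀ {X X' Y Y' : C}, (X ⟶ X') → (Y ⟶ Y') → (tensor X Y ⟶ tensor X' Y')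
  unit : C
  tensorHom_id : ∀ (X Y : C), tensorHom (𝟙 X) (𝟙 Y) = 𝟙 (tensor X Y)
  tensorHom_comp : ∀ {X X' X'' Y Y' Y'' : C} (f : X ⟶ X') (f' : X' ⟶ X'')
      (g : Y ⟶ Y') (g' : Y' ⟶ Y''),
      tensorHom (f ≫ f') (g ≫ g') = tensorHom f g ≫ tensorHom f' g'
  assoc : ∀ X Y Z : C, tensor (tensor X Y) Z = tensor X (tensor Y Z)
  tensorHom_assoc : ∀ {X X' Y Y' Z Z' : C} (f : X ⟶ X') (g : Y ⟶ Y') (h : Z ⟶ Z'),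
      tensorHom (tensorHom f g) h =
        eqToHom (assoc X Y Z) ≫ tensorHom f (tensorHom g h) ≫ eqToHom (assoc X' Y' Z').symm
  unit_left : ∀ X : C, tensor unit X = X
  unit_right : ∀ X : C, tensor X unit = X
  tensorHom_unit_left : ∀ {X X' : C} (f : X ⟶ X'),
      tensorHom (𝟙 unit) f = eqToHom (unit_left X) ≫ f ≫ eqToHom (unit_left X').symm
  tensorHom_unit_right : ∀ {X X' : C} (f : X ⟶ X'),
      tensorHom f (𝟙 unit) = eqToHom (unit_right X) ≫ f ≫ eqToHom (unit_right X').symm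
  γ : ∀ X Y : C, tensor X Y ⟶ tensor Y X
  γ_natural : ∀ {X X' Y Y' : C} (f : X ⟶ X') (g : Y ⟶ Y'),
      tensorHom f g ≫ γ X' Y' = γ X Y ≫ tensorHom g f
  γ_γ : ∀ X Y : C, γ X Y ≫ γ Y X = 𝟙 (tensor X Y)
  γ_unit : ∀ X : C, γ X unit =
      eqToHom ((unit_right X).trans (unit_left X).symm)
  hexagon : ∀ X Y Z : C, γ (tensor X Y) Z =
      eqToHom (assoc X Y Z) ≫ tensorHom (𝟙 X) (γ Y Z) ≫
        eqToHom (assoc X Z Y).symm ≫ tensorHom (γ X Z) (𝟙 Y) ≫ eqToHom (assoc Z X Y)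


variable {D : Type u} [Category.{v} D]

/-- Objects of the Grayson–Quillen group completion `D⁻¹D`: pairs `(a,b)` of
objects of `D`, thought of as formal differences `b - a`. -/
structure GCObj (D : Type u) where
  fst : D
  snd : D

/-- Representatives of morphisms `(a,b) → (c,d)` in `D⁻¹D`: triples
`(s, α : a⊕s → c, β : b⊕s → d)`. -/
structure GCPre (P : Permutative D) (a b c d : D) where
  s : D
  α : P.tensor a s ⟶ c
  β : P.tensor b s ⟶ d

/-- The equivalence relation on representatives: `(s,α,β) ∼ (s',α',β')` iff
there is `γ : s → s'` with `α'∘(id_a⊕γ) = α` and `β'∘(id_b⊕γ) = β`. -/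
def GCRel (P : Permutative D) {a b c d : D} (p p' : GCPre P a b c d) : Prop :=
  ∃ γ : p.s ⟶ p'.s,
    P.tensorHom (𝟙 a) γ ≫ p'.α = p.α ∧ P.tensorHom (𝟙 b) γ ≫ p'.β = p.β

/-- Morphisms of `D⁻¹D`: equivalence classes of representatives. -/
def GCHom (P : Permutative D) (a b c d : D) : Type _ :=
  Quot (@GCRel D _ P a b c d)

/-- Composition of representatives:
`(s,α,β) ∘ (t,α',β') = (s⊕t, α'∘(α⊕id_t), β'∘(β⊕id_t))` (using strict
associativity of `⊕`). -/
def GCcompPre (P : Permutative D) {a b c d e f : D}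
    (p : GCPre P a b c d) (q : GCPre P c d e f) : GCPre P a b e f where
  s := P.tensor p.s q.s
  α := eqToHom (P.assoc a p.s q.s).symm ≫ P.tensorHom p.α (𝟙 q.s) ≫ q.α
  β := eqToHom (P.assoc b p.s q.s).symm ≫ P.tensorHom p.β (𝟙 q.s) ≫ q.β

/-- The identity representative `(0, id, id)`. -/
def GCidPre (P : Permutative D) (a b : D) : GCPre P a b a b where
  s := P.unit
  α := eqToHom (P.unit_right a)
  β := eqToHom (P.unit_right b)

lemma tensor_eqToHom (P : Permutative D) {X X' Y Y' : D} (h : X = X') (h' : Y = Y') :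
    P.tensorHom (eqToHom h) (eqToHom h') =
      eqToHom (by rw [h, h']) := by
  subst h; subst h'; simp [P.tensorHom_id]

lemma aux1 (P : Permutative D) {a c e s s' t t' : D} (g : s ⟶ s') (δ : t ⟶ t')
    (α : P.tensor a s ⟶ c) (α' : P.tensor a s' ⟶ c)
    (α₂ : P.tensor c t ⟶ e) (α₂' : P.tensor c t' ⟶ e)
    (h1 : P.tensorHom (𝟙 a) g ≫ α' = α)
    (h2 : P.tensorHom (𝟙 c) δ ≫ α₂' = α₂) :
    P.tensorHom (𝟙 a) (P.tensorHom g δ) ≫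
      (eqToHom (P.assoc a s' t').symm ≫ P.tensorHom α' (𝟙 t') ≫ α₂') =
    eqToHom (P.assoc a s t).symm ≫ P.tensorHom α (𝟙 t) ≫ α₂ := by
  have e1 : P.tensorHom (𝟙 a) (P.tensorHom g δ) =
      eqToHom (P.assoc a s t).symm ≫ P.tensorHom (P.tensorHom (𝟙 a) g) δ ≫
        eqToHom (P.assoc a s' t') := by
    rw [P.tensorHom_assoc]; simp
  have e2 : P.tensorHom (P.tensorHom (𝟙 a) g) δ ≫ P.tensorHom α' (𝟙 t') =
      P.tensorHom α δ := by
    rw [← P.tensorHom_comp, h1, Category.comp_id]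
  have e3 : P.tensorHom α δ = P.tensorHom α (𝟙 t) ≫ P.tensorHom (𝟙 c) δ := by
    rw [← P.tensorHom_comp, Category.comp_id, Category.id_comp]
  rw [e1]
  simp only [Category.assoc, eqToHom_trans, eqToHom_refl, Category.id_comp, eqToHom_trans_assoc]
  rw [← Category.assoc (P.tensorHom (P.tensorHom (𝟙 a) g) δ), e2, e3]
  simp [h2]

lemma aux_assoc (P : Permutative D) {a c e g s t u : D}
    (α : P.tensor a s ⟶ c) (α₂ : P.tensor c t ⟶ e) (α₃ : P.tensor e u ⟶ g) :
    P.tensorHom (𝟙 a) (eqToHom (P.assoc s t u)) ≫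
      (eqToHom (P.assoc a s (P.tensor t u)).symm ≫
        P.tensorHom α (𝟙 (P.tensor t u)) ≫
        (eqToHom (P.assoc c t u).symm ≫ P.tensorHom α₂ (𝟙 u) ≫ α₃)) =
    eqToHom (P.assoc a (P.tensor s t) u).symm ≫
      P.tensorHom (eqToHom (P.assoc a s t).symm ≫ P.tensorHom α (𝟙 t) ≫ α₂)
        (𝟙 u) ≫ α₃ := by
  have e0 : P.tensorHom (𝟙 a) (eqToHom (P.assoc s t u)) =
      eqToHom (by rw [P.assoc s t u]) := by
    rw [show (𝟙 a) = eqToHom rfl from rfl, tensor_eqToHom]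
  have e1 : P.tensorHom (eqToHom (P.assoc a s t).symm ≫ P.tensorHom α (𝟙 t) ≫ α₂)
      (𝟙 u) =
      P.tensorHom (eqToHom (P.assoc a s t).symm) (𝟙 u) ≫
        P.tensorHom (P.tensorHom α (𝟙 t)) (𝟙 u) ≫ P.tensorHom α₂ (𝟙 u) := by
    rw [← P.tensorHom_comp, ← P.tensorHom_comp]; simp
  have e2 : P.tensorHom (eqToHom (P.assoc a s t).symm) (𝟙 u) =
      eqToHom (by rw [P.assoc a s t]) := by
    rw [show (𝟙 u) = eqToHom rfl from rfl, tensor_eqToHom]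
  have e3 : P.tensorHom (P.tensorHom α (𝟙 t)) (𝟙 u) =
      eqToHom (P.assoc (P.tensor a s) t u) ≫
        P.tensorHom α (𝟙 (P.tensor t u)) ≫ eqToHom (P.assoc c t u).symm := by
    rw [P.tensorHom_assoc, P.tensorHom_id]
  rw [e0, e1, e2, e3]
  simp

lemma aux_id_left (P : Permutative D) {a c s : D} (α : P.tensor a s ⟶ c) :
    P.tensorHom (𝟙 a) (eqToHom (P.unit_left s)) ≫ α =
    eqToHom (P.assoc a P.unit s).symm ≫
      P.tensorHom (eqToHom (P.unit_right a)) (𝟙 s) ≫ α := by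
  have e0 : P.tensorHom (𝟙 a) (eqToHom (P.unit_left s)) =
      eqToHom (by rw [P.unit_left s]) := by
    rw [show (𝟙 a) = eqToHom rfl from rfl, tensor_eqToHom]
  have e1 : P.tensorHom (eqToHom (P.unit_right a)) (𝟙 s) =
      eqToHom (by rw [P.unit_right a]) := by
    rw [show (𝟙 s) = eqToHom rfl from rfl, tensor_eqToHom]
  rw [e0, e1]; simp

lemma aux_id_right (P : Permutative D) {a c s : D} (α : P.tensor a s ⟶ c) :
    P.tensorHom (𝟙 a) (eqToHom (P.unit_right s)) ≫ α =
    eqToHom (P.assoc a s P.unit).symm ≫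
      P.tensorHom α (𝟙 P.unit) ≫ eqToHom (P.unit_right c) := by
  have e0 : P.tensorHom (𝟙 a) (eqToHom (P.unit_right s)) =
      eqToHom (by rw [P.unit_right s]) := by
    rw [show (𝟙 a) = eqToHom rfl from rfl, tensor_eqToHom]
  rw [e0, P.tensorHom_unit_right]; simp

/-- The composite relation is respected. -/
lemma GCRel_comp (P : Permutative D) {a b c d e f : D}
    {p p' : GCPre P a b c d} {q q' : GCPre P c d e f}
    (hp : GCRel P p p') (hq : GCRel P q q') :
    GCRel P (GCcompPre P p q) (GCcompPre P p' q') := by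
  obtain ⟨g, hg1, hg2⟩ := hp
  obtain ⟨δ, hδ1, hδ2⟩ := hq
  exact ⟨P.tensorHom g δ, aux1 P g δ p.α p'.α q.α q'.α hg1 hδ1,
    aux1 P g δ p.β p'.β q.β q'.β hg2 hδ2⟩

lemma GCRel_assoc (P : Permutative D) {a b c d e f g h : D}
    (p : GCPre P a b c d) (q : GCPre P c d e f) (r : GCPre P e f g h) :
    GCRel P (GCcompPre P (GCcompPre P p q) r) (GCcompPre P p (GCcompPre P q r)) :=
  ⟨eqToHom (P.assoc p.s q.s r.s),
    aux_assoc P p.α q.α r.α, aux_assoc P p.β q.β r.β⟩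

lemma GCRel_id_left (P : Permutative D) {a b c d : D} (p : GCPre P a b c d) :
    GCRel P (GCcompPre P (GCidPre P a b) p) p :=
  ⟨eqToHom (P.unit_left p.s), aux_id_left P p.α, aux_id_left P p.β⟩

lemma GCRel_id_right (P : Permutative D) {a b c d : D} (p : GCPre P a b c d) :
    GCRel P (GCcompPre P p (GCidPre P c d)) p :=
  ⟨eqToHom (P.unit_right p.s), aux_id_right P p.α, aux_id_right P p.β⟩

/-- Composition on equivalence classes. -/
def GCcomp (P : Permutative D) {a b c d e f : D}
    (x : GCHom P a b c d) (y : GCHom P c d e f) : GCHom P a b e f :=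
  Quot.lift
    (fun p => Quot.lift (fun q => (Quot.mk _ (GCcompPre P p q) : GCHom P a b e f))
      (fun q q' hq => Quot.sound (GCRel_comp P ⟨𝟙 p.s, by simp [P.tensorHom_id],
         by simp [P.tensorHom_id]⟩ hq)) y)
    (fun p p' hp => by
      refine Quot.inductionOn y (fun q => ?_)
      exact Quot.sound (GCRel_comp P hp ⟨𝟙 q.s, by simp [P.tensorHom_id],
        by simp [P.tensorHom_id]⟩)) x

/-- The group completion category. -/
def GCCat (P : Permutative D) : Category.{max u v} (GCObj D) where
  Hom X Y := GCHom P X.fst X.snd Y.fst Y.snd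
  id X := Quot.mk _ (GCidPre P X.fst X.snd)
  comp := GCcomp P
  id_comp f := Quot.inductionOn f (fun p => Quot.sound (GCRel_id_left _ p))
  comp_id f := Quot.inductionOn f (fun p => Quot.sound (GCRel_id_right _ p))
  assoc f g h := by
    refine Quot.inductionOn f (fun p => ?_)
    refine Quot.inductionOn g (fun q => ?_)
    refine Quot.inductionOn h (fun r => ?_)
    exact Quot.sound (GCRel_assoc P p q r)

/-- composition and equivalence classes in the group completion
`D⁻¹D` are well defined: the composite class is independent of the choice of
representatives, composition is associative, and `[(0,id,id)]` is the
identity; hence `D⁻¹D` is a category. -/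
theorem groupCompletion_is_category (P : Permutative D) :
    -- composition descends to equivalence classes
    (∀ (a b c d e f : D) (p p' : GCPre P a b c d) (q q' : GCPre P c d e f),
        GCRel P p p' → GCRel P q q' →
        (Quot.mk _ (GCcompPre P p q) : GCHom P a b e f) =
          Quot.mk _ (GCcompPre P p' q')) ∧
    -- associativity
    (∀ (a b c d e f g h : D) (p : GCPre P a b c d) (q : GCPre P c d e f)
        (r : GCPre P e f g h),
        (Quot.mk _ (GCcompPre P (GCcompPre P p q) r) : GCHom P a b g h) =
          Quot.mk _ (GCcompPre P p (GCcompPre P q r))) ∧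
    -- identities
    (∀ (a b c d : D) (p : GCPre P a b c d),
        (Quot.mk _ (GCcompPre P (GCidPre P a b) p) : GCHom P a b c d) =
          Quot.mk _ p ∧
        (Quot.mk _ (GCcompPre P p (GCidPre P c d)) : GCHom P a b c d) =
          Quot.mk _ p) ∧
    -- hence `D⁻¹D` is a category
    ∃ inst : Category.{max u v} (GCObj D),
      ∀ X Y : GCObj D,
        @Quiver.Hom (GCObj D) (inst.toCategoryStruct.toQuiver) X Y =
          GCHom P X.fst X.snd Y.fst Y.snd := by
  refine ⟨fun a b c d e f p p' q q' hp hq => Quot.sound (GCRel_comp P hp hq),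
    fun a b c d e f g h p q r => Quot.sound (GCRel_assoc P p q r),
    fun a b c d p => ⟨Quot.sound (GCRel_id_left P p), Quot.sound (GCRel_id_right P p)⟩,
    GCCat P, fun X Y => rfl⟩
end
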